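/- Let 0 < α < β and let γ₁ < γ₂ ≤ 0 with βγ₁ > −1. Then C_{α,β,γ₁}(ε) > C_{α,β,γ₂}(ε) for all ε ∈ (0,1), while C_{α,β,γ₁}(ε) = C_{α,β,γ₂}(ε) for ε = 0 and ε = 1. -/

import Mathlib

open Set

/-- The function `C_{α,β,γ}(ε)` from the paper:
`C_{α,β,γ}(ε) = (ε^{γβ+1}+1)^{1/β} (1+ε)^{1/α} / ((ε^{γα+1}+1)^{1/α} (1+ε)^{1/β})`. -/
noncomputable def Cfun (α β γ ε : ℝ) : ℝ :=
  ((ε ^ (γ * β + 1) + 1) ^ (1 / β) * (1 + ε) ^ (1 / α)) /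
    ((ε ^ (γ * α + 1) + 1) ^ (1 / α) * (1 + ε) ^ (1 / β))

namespace CfunAux

noncomputable def F (l s : ℝ) : ℝ := Real.log (Real.exp (l * s) + 1)
noncomputable def G (l s : ℝ) : ℝ := l * Real.exp (l * s) / (Real.exp (l * s) + 1)
noncomputable def G2 (l s : ℝ) : ℝ := l ^ 2 * Real.exp (l * s) / (Real.exp (l * s) + 1) ^ 2
noncomputable def psi (l s : ℝ) : ℝ := (s - 1) * G l s - F l s
noncomputable def hfun (l γ₁ γ₂ t : ℝ) : ℝ := (F l (γ₁ * t + 1) - F l (γ₂ * t + 1)) / t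

lemma exp_add_one_pos (x : ℝ) : 0 < Real.exp x + 1 := by positivity

lemma hasDerivAt_linear (l s : ℝ) : HasDerivAt (fun s : ℝ => l * s) l s := by
  simpa using (hasDerivAt_id s).const_mul l

lemma hasDerivAt_F (l s : ℝ) : HasDerivAt (F l) (G l s) s := by
  have h2 := (hasDerivAt_linear l s).exp
  have h3 := h2.add_const 1
  have h4 := h3.log (ne_of_gt (exp_add_one_pos _))
  show HasDerivAt (fun y => F l y) (G l s) s
  simpa [F, G, mul_comm] using h4

lemma hasDerivAt_G (l s : ℝ) : HasDerivAt (G l) (G2 l s) s := by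
  have hnum := ((hasDerivAt_linear l s).exp).const_mul l
  have hden := ((hasDerivAt_linear l s).exp).add_const 1
  have h := hnum.div hden (ne_of_gt (exp_add_one_pos _))
  refine h.congr_deriv ?_
  have hp := exp_add_one_pos (l * s)
  unfold G2
  field_simp
  ring

lemma hasDerivAt_psi (l s : ℝ) : HasDerivAt (psi l) ((s - 1) * G2 l s) s := by
  have h1 := ((hasDerivAt_id s).sub_const 1).mul (hasDerivAt_G l s)
  have h2 := h1.sub (hasDerivAt_F l s)
  refine h2.congr_deriv ?_
  simp only [id_eq]
  ring

lemma G2_pos (l : ℝ) (hl : l ≠ 0) (s : ℝ) : 0 < G2 l s := by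
  have h2 : 0 < l ^ 2 := by positivity
  unfold G2
  positivity

lemma psi_strictAnti (l : ℝ) (hl : l ≠ 0) : StrictAntiOn (psi l) (Iic 1) := by
  apply strictAntiOn_of_deriv_neg (convex_Iic 1)
    (fun s _ => (hasDerivAt_psi l s).continuousAt.continuousWithinAt)
  intro s hs
  rw [interior_Iic] at hs
  rw [(hasDerivAt_psi l s).deriv]
  exact mul_neg_of_neg_of_pos (by linarith [mem_Iio.mp hs]) (G2_pos l hl s)

lemma hasDerivAt_hfun (l γ₁ γ₂ t : ℝ) (ht : t ≠ 0) :
    HasDerivAt (hfun l γ₁ γ₂)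
      (((γ₁ * G l (γ₁ * t + 1) - γ₂ * G l (γ₂ * t + 1)) * t -
        (F l (γ₁ * t + 1) - F l (γ₂ * t + 1))) / t ^ 2) t := by
  have i1 : HasDerivAt (fun t : ℝ => γ₁ * t + 1) γ₁ t := (hasDerivAt_linear γ₁ t).add_const 1
  have i2 : HasDerivAt (fun t : ℝ => γ₂ * t + 1) γ₂ t := (hasDerivAt_linear γ₂ t).add_const 1
  have d1 := (hasDerivAt_F l (γ₁ * t + 1)).comp t i1
  have d2 := (hasDerivAt_F l (γ₂ * t + 1)).comp t i2
  have dN := d1.sub d2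
  have h := dN.div (hasDerivAt_id t) ht
  simp only [Function.comp, id] at h
  unfold hfun
  refine h.congr_deriv ?_
  simp only [Pi.sub_apply, Function.comp_apply]
  ring

lemma hfun_lt (l γ₁ γ₂ a b : ℝ) (hl : l ≠ 0) (ha : 0 < a) (hab : a < b)
    (hγ : γ₁ < γ₂) (hγ₂ : γ₂ ≤ 0) :
    hfun l γ₁ γ₂ a < hfun l γ₁ γ₂ b := by
  have hmono : StrictMonoOn (hfun l γ₁ γ₂) (Icc a b) := by
    apply strictMonoOn_of_deriv_pos (convex_Icc a b)
    · intro t ht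
      have ht0 : t ≠ 0 := ne_of_gt (lt_of_lt_of_le ha ht.1)
      exact (hasDerivAt_hfun l γ₁ γ₂ t ht0).continuousAt.continuousWithinAt
    · intro t ht
      rw [interior_Icc] at ht
      have ht0 : 0 < t := lt_trans ha ht.1
      rw [(hasDerivAt_hfun l γ₁ γ₂ t (ne_of_gt ht0)).deriv]
      apply div_pos _ (by positivity)
      have key : psi l (γ₂ * t + 1) < psi l (γ₁ * t + 1) := by
        apply psi_strictAnti l hl
        · exact mem_Iic.mpr (by nlinarith)
        · exact mem_Iic.mpr (by nlinarith)
        · nlinarith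
      have e : psi l (γ₁ * t + 1) - psi l (γ₂ * t + 1) =
          (γ₁ * G l (γ₁ * t + 1) - γ₂ * G l (γ₂ * t + 1)) * t -
            (F l (γ₁ * t + 1) - F l (γ₂ * t + 1)) := by
        unfold psi; ring
      linarith
  exact hmono (left_mem_Icc.mpr hab.le) (right_mem_Icc.mpr hab.le) hab

lemma Cfun_pos (α β γ ε : ℝ) (hε : 0 < ε) : 0 < Cfun α β γ ε := by
  unfold Cfun
  have h1 : (0:ℝ) < ε ^ (γ * β + 1) + 1 := by positivity
  have h2 : (0:ℝ) < ε ^ (γ * α + 1) + 1 := by positivity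
  have h3 : (0:ℝ) < 1 + ε := by linarith
  positivity

lemma log_Cfun (α β γ ε : ℝ) (hε : 0 < ε) (hα : α ≠ 0) (hβ : β ≠ 0) :
    Real.log (Cfun α β γ ε) =
      1 / β * F (Real.log ε) (γ * β + 1) - 1 / α * F (Real.log ε) (γ * α + 1) +
        (1 / α - 1 / β) * Real.log (1 + ε) := by
  have h1 : (0:ℝ) < ε ^ (γ * β + 1) + 1 := by positivity
  have h2 : (0:ℝ) < ε ^ (γ * α + 1) + 1 := by positivity
  have h3 : (0:ℝ) < 1 + ε := by linarith
  have e1 : ε ^ (γ * β + 1) = Real.exp (Real.log ε * (γ * β + 1)) :=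
    Real.rpow_def_of_pos hε _
  have e2 : ε ^ (γ * α + 1) = Real.exp (Real.log ε * (γ * α + 1)) :=
    Real.rpow_def_of_pos hε _
  unfold Cfun F
  rw [Real.log_div (by positivity) (by positivity),
    Real.log_mul (by positivity) (by positivity),
    Real.log_mul (by positivity) (by positivity),
    Real.log_rpow h1, Real.log_rpow h2, Real.log_rpow h3, Real.log_rpow h3, e1, e2]
  ring

end CfunAux

open CfunAux in
theorem Cfun_strict_anti_in_gamma_nonpos
    (α β γ₁ γ₂ : ℝ) (hα : 0 < α) (hαβ : α < β) (hγ : γ₁ < γ₂) (hγ₂ : γ₂ ≤ 0)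
    (hγ₁β : β * γ₁ > -1) :
    (∀ ε : ℝ, 0 < ε → ε < 1 → Cfun α β γ₁ ε > Cfun α β γ₂ ε) ∧
      Cfun α β γ₁ 0 = Cfun α β γ₂ 0 ∧ Cfun α β γ₁ 1 = Cfun α β γ₂ 1 := by
  have hβ : 0 < β := hα.trans hαβ
  have hγ₁0 : γ₁ < 0 := lt_of_lt_of_le hγ hγ₂
  refine ⟨?_, ?_, ?_⟩
  · intro ε hε0 hε1
    have hl : Real.log ε ≠ 0 := ne_of_lt (Real.log_neg hε0 hε1)
    have hC1 := Cfun_pos α β γ₁ ε hε0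
    have hC2 := Cfun_pos α β γ₂ ε hε0
    have key := hfun_lt (Real.log ε) γ₁ γ₂ α β hl hα hαβ hγ hγ₂
    unfold hfun at key
    have key' : 1 / α * (F (Real.log ε) (γ₁ * α + 1) - F (Real.log ε) (γ₂ * α + 1)) <
        1 / β * (F (Real.log ε) (γ₁ * β + 1) - F (Real.log ε) (γ₂ * β + 1)) := by
      rw [one_div_mul_eq_div, one_div_mul_eq_div]; exact key
    rw [gt_iff_lt, ← Real.exp_log hC2, ← Real.exp_log hC1]
    apply Real.exp_lt_exp.mpr
    rw [log_Cfun α β γ₁ ε hε0 (ne_of_gt hα) (ne_of_gt hβ),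
      log_Cfun α β γ₂ ε hε0 (ne_of_gt hα) (ne_of_gt hβ)]
    rw [mul_sub, mul_sub] at key'
    linarith
  · have e1 : γ₁ * β + 1 ≠ 0 := by nlinarith
    have e2 : γ₁ * α + 1 ≠ 0 := by nlinarith
    have e3 : γ₂ * β + 1 ≠ 0 := by nlinarith
    have e4 : γ₂ * α + 1 ≠ 0 := by nlinarith
    simp [Cfun, Real.zero_rpow e1, Real.zero_rpow e2, Real.zero_rpow e3, Real.zero_rpow e4]
  · simp [Cfun]
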